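/- An optimal contract is attained at a critical value or at zero: there exists α* ∈ C_{f,c} ∪ {0} such that (1 − α*)·V_{f,c}(α*) ≥ (1 − α)·V_{f,c}(α) for every α ∈ [0,1]. -/

import Mathlib

open Finset

/-- The agent's demand at contract `α`: sets maximizing `α·f(S) − c(S)`. -/
def Demand (n : ℕ) (f : Finset (Fin n) → ℝ) (c : Fin n → ℝ) (α : ℝ) :
    Set (Finset (Fin n)) :=
  {S | ∀ T : Finset (Fin n), α * f T - ∑ a ∈ T, c a ≤ α * f S - ∑ a ∈ S, c a}

/-- `V_{f,c}(α)`: the maximal value of `f` over the demand at `α`. -/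
noncomputable def Vfc (n : ℕ) (f : Finset (Fin n) → ℝ) (c : Fin n → ℝ) (α : ℝ) : ℝ :=
  sSup (f '' Demand n f c α)

/-- The critical set `C_{f,c}`. -/
def Critical (n : ℕ) (f : Finset (Fin n) → ℝ) (c : Fin n → ℝ) : Set ℝ :=
  {α | 0 < α ∧ α ≤ 1 ∧
    ∀ ε : ℝ, 0 < ε → ε ≤ α → Vfc n f c (α - ε) ≠ Vfc n f c α}

lemma OC.demand_nonempty (n : ℕ) (f : Finset (Fin n) → ℝ) (c : Fin n → ℝ) (α : ℝ) :
    (Demand n f c α).Nonempty := by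
  obtain ⟨S, hS⟩ := Finite.exists_max (fun S : Finset (Fin n) => α * f S - ∑ a ∈ S, c a)
  exact ⟨S, fun T => hS T⟩

lemma OC.image_finite (n : ℕ) (f : Finset (Fin n) → ℝ) (c : Fin n → ℝ) (α : ℝ) :
    (f '' Demand n f c α).Finite :=
  (Set.finite_range f).subset (Set.image_subset_range f _)

lemma OC.Vfc_mem (n : ℕ) (f : Finset (Fin n) → ℝ) (c : Fin n → ℝ) (α : ℝ) :
    Vfc n f c α ∈ f '' Demand n f c α :=
  ((OC.demand_nonempty n f c α).image f).csSup_mem (OC.image_finite n f c α)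

lemma OC.le_Vfc (n : ℕ) (f : Finset (Fin n) → ℝ) (c : Fin n → ℝ) {α : ℝ}
    {S : Finset (Fin n)} (hS : S ∈ Demand n f c α) : f S ≤ Vfc n f c α :=
  le_csSup (OC.image_finite n f c α).bddAbove ⟨S, hS, rfl⟩

lemma OC.Vfc_mono (n : ℕ) (f : Finset (Fin n) → ℝ) (c : Fin n → ℝ) {α β : ℝ}
    (h : α ≤ β) : Vfc n f c α ≤ Vfc n f c β := by
  rcases eq_or_lt_of_le h with rfl | h
  · exact le_refl _
  obtain ⟨S, hS, hfS⟩ := OC.Vfc_mem n f c α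
  obtain ⟨T, hT, hfT⟩ := OC.Vfc_mem n f c β
  rw [← hfS, ← hfT]
  nlinarith [hS T, hT S]

/-- Level sets of `Vfc` (intersected with `[0,1]`) contain their infima. -/
lemma OC.sInf_mem_level (n : ℕ) (f : Finset (Fin n) → ℝ) (c : Fin n → ℝ) {v : ℝ}
    (hne : {α : ℝ | α ∈ Set.Icc (0:ℝ) 1 ∧ Vfc n f c α = v}.Nonempty) :
    sInf {α : ℝ | α ∈ Set.Icc (0:ℝ) 1 ∧ Vfc n f c α = v} ∈
      {α : ℝ | α ∈ Set.Icc (0:ℝ) 1 ∧ Vfc n f c α = v} := by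
  classical
  set A := {α : ℝ | α ∈ Set.Icc (0:ℝ) 1 ∧ Vfc n f c α = v} with hA
  set m := sInf A with hm
  have hbdd : BddBelow A := ⟨0, fun x hx => hx.1.1⟩
  have hm0 : 0 ≤ m := le_csInf hne (fun x hx => hx.1.1)
  have hne' := hne
  obtain ⟨β₀, hβ₀⟩ := hne'
  have hmβ₀ : m ≤ β₀ := csInf_le hbdd hβ₀
  have hm1 : m ≤ 1 := le_trans hmβ₀ hβ₀.1.2
  by_cases hVm : Vfc n f c m = v
  · exact ⟨⟨hm0, hm1⟩, hVm⟩
  exfalso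
  have hmlt : m < β₀ := by
    rcases lt_or_eq_of_le hmβ₀ with h | h
    · exact h
    · exact absurd (h ▸ hβ₀.2) hVm
  -- every point of (m, β₀] has value v
  have hint : ∀ γ : ℝ, m < γ → γ ≤ β₀ → Vfc n f c γ = v := by
    intro γ h1 h2
    refine le_antisymm (hβ₀.2 ▸ OC.Vfc_mono n f c h2) ?_
    obtain ⟨β', hβ', hβ'lt⟩ := exists_lt_of_csInf_lt hne h1
    exact hβ'.2 ▸ OC.Vfc_mono n f c (le_of_lt hβ'lt)
  -- pigeonhole: one set `S` with `f S = v` is demanded arbitrarily close to `m`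
  have claim : ∃ S : Finset (Fin n), f S = v ∧
      ∀ δ : ℝ, 0 < δ → ∃ β : ℝ, m < β ∧ β < m + δ ∧ S ∈ Demand n f c β := by
    by_contra hcon
    push_neg at hcon
    have hcon' : ∀ S : Finset (Fin n), f S = v →
        ∃ δ : ℝ, 0 < δ ∧ ∀ β : ℝ, m < β → β < m + δ → S ∉ Demand n f c β := by
      intro S hfS
      obtain ⟨δ, hδ, h⟩ := hcon S hfS
      exact ⟨δ, hδ, fun β h1 h2 => h β h1 h2⟩
    set δf : Finset (Fin n) → ℝ := fun S =>
      if h : f S = v then (hcon' S h).choose else 1 with hδf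
    set δ : ℝ := Finset.univ.inf' ⟨∅, Finset.mem_univ ∅⟩ δf with hδdef
    have hδpos : 0 < δ := by
      rw [hδdef]
      refine (Finset.lt_inf'_iff _).2 ?_
      intro S _
      rw [hδf]
      dsimp only
      split_ifs with h
      · exact (hcon' S h).choose_spec.1
      · exact one_pos
    set β : ℝ := min (m + δ/2) β₀ with hβdef
    have hβ1 : m < β := lt_min (by linarith) hmlt
    have hβ2 : β ≤ β₀ := min_le_right _ _
    have hVβ : Vfc n f c β = v := hint β hβ1 hβ2
    obtain ⟨S, hSD, hfS⟩ := OC.Vfc_mem n f c β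
    have hfSv : f S = v := hfS.trans hVβ
    have hle : δ ≤ δf S := Finset.inf'_le δf (Finset.mem_univ S)
    have hδfS : δf S = (hcon' S hfSv).choose := by rw [hδf]; simp [hfSv]
    refine (hcon' S hfSv).choose_spec.2 β hβ1 ?_ hSD
    rw [← hδfS]
    calc β ≤ m + δ/2 := min_le_left _ _
    _ < m + δ := by linarith
    _ ≤ m + δf S := by linarith
  obtain ⟨S, hfSv, hS⟩ := claim
  -- `S` is demanded at `m` itself
  have hSm : S ∈ Demand n f c m := by
    intro T
    by_contra hT
    push_neg at hT
    set d : ℝ := (m * f T - ∑ a ∈ T, c a) - (m * f S - ∑ a ∈ S, c a) with hd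
    have hdpos : 0 < d := by rw [hd]; linarith
    have hpos : (0:ℝ) < |f S - f T| + 1 := by positivity
    obtain ⟨β, hb1, hb2, hbD⟩ := hS (d / (|f S - f T| + 1)) (by positivity)
    have h1 : β * f T - ∑ a ∈ T, c a ≤ β * f S - ∑ a ∈ S, c a := hbD T
    have e0 : (β - m) * (f S - f T) =
        ((β * f S - ∑ a ∈ S, c a) - (β * f T - ∑ a ∈ T, c a))
        - ((m * f S - ∑ a ∈ S, c a) - (m * f T - ∑ a ∈ T, c a)) := by ring
    have e1 : (β - m) * (f S - f T) ≤ (β - m) * |f S - f T| :=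
      mul_le_mul_of_nonneg_left (le_abs_self _) (by linarith)
    have e2 : (β - m) * |f S - f T| ≤ (β - m) * (|f S - f T| + 1) := by
      have := abs_nonneg (f S - f T)
      nlinarith
    have e3 : (β - m) * (|f S - f T| + 1) < (d / (|f S - f T| + 1)) * (|f S - f T| + 1) :=
      mul_lt_mul_of_pos_right (by linarith) hpos
    have e4 : (d / (|f S - f T| + 1)) * (|f S - f T| + 1) = d :=
      div_mul_cancel₀ _ (ne_of_gt hpos)
    rw [hd] at e4
    linarith [e0, e1, e2, e3]
  have hge : v ≤ Vfc n f c m := hfSv ▸ OC.le_Vfc n f c hSm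
  have hle' : Vfc n f c m ≤ v := hβ₀.2 ▸ OC.Vfc_mono n f c hmβ₀
  exact hVm (le_antisymm hle' hge)

lemma OC.Vfc_nonneg (n : ℕ) (f : Finset (Fin n) → ℝ) (c : Fin n → ℝ)
    (hf01 : ∀ S : Finset (Fin n), 0 ≤ f S ∧ f S ≤ 1) (α : ℝ) :
    0 ≤ Vfc n f c α := by
  obtain ⟨S, _, hfS⟩ := OC.Vfc_mem n f c α
  exact hfS ▸ (hf01 S).1

/-- An optimal contract is attained at a critical value or at zero. -/
theorem optimal_contract_at_critical (n : ℕ) (f : Finset (Fin n) → ℝ) (c : Fin n → ℝ)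
    (hf0 : f ∅ = 0) (hmono : ∀ S T : Finset (Fin n), S ⊆ T → f S ≤ f T)
    (hf01 : ∀ S : Finset (Fin n), 0 ≤ f S ∧ f S ≤ 1) (hc : ∀ a : Fin n, 0 < c a) :
    ∃ αstar : ℝ, αstar ∈ Critical n f c ∪ {0} ∧
      ∀ α ∈ Set.Icc (0 : ℝ) 1,
        (1 - α) * Vfc n f c α ≤ (1 - αstar) * Vfc n f c αstar := by
  classical
  set A : ℝ → Set ℝ := fun v => {α : ℝ | α ∈ Set.Icc (0:ℝ) 1 ∧ Vfc n f c α = v} with hA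
  set mf : ℝ → ℝ := fun v => sInf (A v) with hmf
  set W : Finset ℝ :=
    (Finset.univ.image f).filter (fun v => (A v).Nonempty) with hW
  have hmemW : ∀ α ∈ Set.Icc (0:ℝ) 1, Vfc n f c α ∈ W := by
    intro α hα
    obtain ⟨S, _, hfS⟩ := OC.Vfc_mem n f c α
    rw [hW, Finset.mem_filter]
    exact ⟨Finset.mem_image.2 ⟨S, Finset.mem_univ S, hfS⟩, ⟨α, hα, rfl⟩⟩
  have hWne : W.Nonempty := ⟨Vfc n f c 0, hmemW 0 ⟨le_refl 0, zero_le_one⟩⟩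
  obtain ⟨vs, hvsW, hmax⟩ := W.exists_max_image (fun v => (1 - mf v) * v) hWne
  have hvsA : (A vs).Nonempty := (Finset.mem_filter.1 hvsW).2
  have hstar : mf vs ∈ A vs := OC.sInf_mem_level n f c hvsA
  refine ⟨mf vs, ?_, ?_⟩
  · by_cases h0 : mf vs = 0
    · exact Or.inr h0
    · left
      have hpos : 0 < mf vs := lt_of_le_of_ne hstar.1.1 (Ne.symm h0)
      refine ⟨hpos, hstar.1.2, ?_⟩
      intro ε hε1 hε2 heq
      have hmem : mf vs - ε ∈ A vs := by
        refine ⟨⟨by linarith, by linarith [hstar.1.2]⟩, heq.trans hstar.2⟩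
      have : mf vs ≤ mf vs - ε := csInf_le ⟨0, fun x hx => hx.1.1⟩ hmem
      linarith
  · intro α hα
    set v : ℝ := Vfc n f c α with hv
    have hvW : v ∈ W := hmemW α hα
    have hvA : (A v).Nonempty := ⟨α, hα, rfl⟩
    have hmv : mf v ∈ A v := OC.sInf_mem_level n f c hvA
    have hmvle : mf v ≤ α := csInf_le ⟨0, fun x hx => hx.1.1⟩ ⟨hα, rfl⟩
    have hv0 : 0 ≤ v := OC.Vfc_nonneg n f c hf01 α
    have h1 : (1 - α) * v ≤ (1 - mf v) * v :=
      mul_le_mul_of_nonneg_right (by linarith) hv0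
    have h2 : (1 - mf v) * v ≤ (1 - mf vs) * vs := hmax v hvW
    rw [hstar.2]
    exact le_trans h1 h2
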